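/- Suppose W₊(H,H₀) exists on ℋ, is injective, satisfies the intertwining relation e^{-itH}W₊(H,H₀) = W₊(H,H₀)e^{-itH₀} for t ∈ ℝ, is a contraction, and satisfies lim_{t→∞}‖W₊(H,H₀)e^{itH₀}u‖ = ‖u‖ for all u. Then Ran(W₊(H,H₀)) is closed if and only if the restriction of {e^{-itH}}_{t∈ℝ} to Ran(W₊(H,H₀)) is uniformly bounded in t ∈ ℝ. -/

import Mathlib

open MeasureTheory Filter Topology ContinuousLinearMap

/-- suppose `W = W₊(H,H₀)` exists on ℋ, is injective, intertwines
(`e^{-itH}W = W e^{-itH₀}` for all `t ∈ ℝ`), is a contraction, and satisfies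
`lim_{t→∞} ‖W e^{itH₀}u‖ = ‖u‖` for all `u`.  Then `Ran W` is closed iff the
restriction of `{e^{-itH}}_{t∈ℝ}` to `Ran W` is uniformly bounded.
Here `U0 t = e^{-itH₀}` is a unitary group and `U t = e^{-itH}` a group. -/
theorem stmt11
    {ℋ : Type*} [NormedAddCommGroup ℋ] [InnerProductSpace ℂ ℋ] [CompleteSpace ℋ]
    [TopologicalSpace.SeparableSpace ℋ]
    (U0 U : ℝ → ℋ →L[ℂ] ℋ)
    (hU00 : U0 0 = 1) (hgroup0 : ∀ s t : ℝ, U0 (s + t) = (U0 s).comp (U0 t))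
    (hunitary : ∀ t : ℝ, ∀ u : ℋ, ‖U0 t u‖ = ‖u‖)
    (hU0' : U 0 = 1) (hgroup : ∀ s t : ℝ, U (s + t) = (U s).comp (U t))
    (W : ℋ →L[ℂ] ℋ)
    (hW : ∀ u : ℋ, Tendsto (fun t => U t (U0 (-t) u)) atTop (𝓝 (W u)))
    (hinj : Function.Injective W)
    (hint : ∀ t : ℝ, ∀ u : ℋ, U t (W u) = W (U0 t u))
    (hWcontr : ∀ u : ℋ, ‖W u‖ ≤ ‖u‖)
    (hlim : ∀ u : ℋ, Tendsto (fun t => ‖W (U0 (-t) u)‖) atTop (𝓝 ‖u‖)) :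
    IsClosed (Set.range W) ↔
      ∃ M : ℝ, ∀ t : ℝ, ∀ v ∈ Set.range W, ‖U t v‖ ≤ M * ‖v‖ := by
  constructor
  · intro hclosed
    -- W is bounded below via the open mapping theorem
    have hK : IsClosed ((LinearMap.range (W : ℋ →ₗ[ℂ] ℋ) : Submodule ℂ ℋ) : Set ℋ) := by
      rwa [LinearMap.coe_range]
    haveI : CompleteSpace (LinearMap.range (W : ℋ →ₗ[ℂ] ℋ) : Submodule ℂ ℋ) := hK.completeSpace_coe
    set f : ℋ →L[ℂ] (LinearMap.range (W : ℋ →ₗ[ℂ] ℋ) : Submodule ℂ ℋ) :=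
      W.codRestrict (LinearMap.range (W : ℋ →ₗ[ℂ] ℋ)) (fun u => LinearMap.mem_range_self _ u) with hf
    have hker : LinearMap.ker (f : ℋ →ₗ[ℂ] (LinearMap.range (W : ℋ →ₗ[ℂ] ℋ) : Submodule ℂ ℋ)) = ⊥ := by
      rw [hf, ContinuousLinearMap.ker_codRestrict]
      exact LinearMap.ker_eq_bot.2 hinj
    have hrange : LinearMap.range (f : ℋ →ₗ[ℂ] (LinearMap.range (W : ℋ →ₗ[ℂ] ℋ) : Submodule ℂ ℋ)) = ⊤ := by
      rw [LinearMap.range_eq_top]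
      rintro ⟨v, u, rfl⟩
      exact ⟨u, rfl⟩
    let e := ContinuousLinearEquiv.ofBijective f hker hrange
    set C : ℝ := ‖(e.symm : (LinearMap.range (W : ℋ →ₗ[ℂ] ℋ) : Submodule ℂ ℋ) →L[ℂ] ℋ)‖ with hC
    have hbelow : ∀ u : ℋ, ‖u‖ ≤ C * ‖W u‖ := by
      intro u
      have h1 : e.symm (e u) = u := e.symm_apply_apply u
      calc ‖u‖ = ‖e.symm (e u)‖ := by rw [h1]
        _ ≤ C * ‖e u‖ := (e.symm : (LinearMap.range (W : ℋ →ₗ[ℂ] ℋ) : Submodule ℂ ℋ) →L[ℂ] ℋ).le_opNorm _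
        _ = C * ‖W u‖ := rfl
    refine ⟨max C 1, fun t v hv => ?_⟩
    obtain ⟨u, rfl⟩ := hv
    have h2 : ‖U t (W u)‖ = ‖W (U0 t u)‖ := by rw [hint]
    calc ‖U t (W u)‖ = ‖W (U0 t u)‖ := h2
      _ ≤ ‖U0 t u‖ := hWcontr _
      _ = ‖u‖ := hunitary _ _
      _ ≤ C * ‖W u‖ := hbelow u
      _ ≤ max C 1 * ‖W u‖ :=
        mul_le_mul_of_nonneg_right (le_max_left _ _) (norm_nonneg _)
  · rintro ⟨M, hM⟩
    set M' : ℝ := max M 1 with hM'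
    have hM'pos : 0 < M' := lt_of_lt_of_le one_pos (le_max_right _ _)
    have hbelow : ∀ u : ℋ, ‖u‖ ≤ M' * ‖W u‖ := by
      intro u
      refine le_of_tendsto (hlim u) (Filter.Eventually.of_forall fun t => ?_)
      have h1 : W (U0 (-t) u) = U (-t) (W u) := (hint (-t) u).symm
      rw [h1]
      calc ‖U (-t) (W u)‖ ≤ M * ‖W u‖ := hM (-t) (W u) ⟨u, rfl⟩
        _ ≤ M' * ‖W u‖ :=
          mul_le_mul_of_nonneg_right (le_max_left _ _) (norm_nonneg _)
    have halip : AntilipschitzWith ⟨M', hM'pos.le⟩ W :=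
      ContinuousLinearMap.antilipschitz_of_bound W hbelow
    exact halip.isClosed_range W.uniformContinuous
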